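/- arXiv:math/0412254 — 2 statements merged into one kernel-verified Lean document; each statement's English description precedes it below -/
import Mathlib

section
/- Let R be an ergodic countable Borel equivalence relation of finite type on a standard Borel space X, with an atomless Borel probability measure μ that is invariant for R. Suppose that every finite graphing of R admits a vanishing Følner sequence. Then for every finite graphing Φ of R, every c ∈ (0,1) and every ε > 0, there exists a Borel set A ⊆ X with μ(A) = c and μ(∂_Φ A) ≤ ε·μ(A). -/
open MeasureTheory Filter Set
open scoped ENNReal

/-- A partial isomorphism of a standard Borel space `X`: a Borel bijection between
two Borel subsets `dom` and `ran` of `X`, with Borel inverse. -/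
structure PartialIso (X : Type*) [MeasurableSpace X] where
  dom : Set X
  ran : Set X
  toFun : X → X
  invFun : X → X
  measurableSet_dom : MeasurableSet dom
  measurableSet_ran : MeasurableSet ran
  measurable_toFun : Measurable toFun
  measurable_invFun : Measurable invFun
  mapsTo : Set.MapsTo toFun dom ran
  mapsTo_inv : Set.MapsTo invFun ran dom
  left_inv : ∀ x ∈ dom, invFun (toFun x) = x
  right_inv : ∀ y ∈ ran, toFun (invFun y) = y

namespace PartialIso

variable {X : Type*} [MeasurableSpace X]

/-- The identity as a partial isomorphism. -/
def refl (X : Type*) [MeasurableSpace X] : PartialIso X :=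
  ⟨Set.univ, Set.univ, id, id, MeasurableSet.univ, MeasurableSet.univ,
   measurable_id, measurable_id, Set.mapsTo_univ _ _, Set.mapsTo_univ _ _,
   fun _ _ => rfl, fun _ _ => rfl⟩

/-- The inverse of a partial isomorphism. -/
def symm (f : PartialIso X) : PartialIso X :=
  ⟨f.ran, f.dom, f.invFun, f.toFun, f.measurableSet_ran, f.measurableSet_dom,
   f.measurable_invFun, f.measurable_toFun, f.mapsTo_inv, f.mapsTo,
   f.right_inv, f.left_inv⟩

/-- Composition (first `f`, then `g`) of partial isomorphisms, on its natural domain. -/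
def trans (f g : PartialIso X) : PartialIso X where
  dom := f.dom ∩ f.toFun ⁻¹' g.dom
  ran := g.ran ∩ g.invFun ⁻¹' f.ran
  toFun := g.toFun ∘ f.toFun
  invFun := f.invFun ∘ g.invFun
  measurableSet_dom := f.measurableSet_dom.inter (f.measurable_toFun g.measurableSet_dom)
  measurableSet_ran := g.measurableSet_ran.inter (g.measurable_invFun f.measurableSet_ran)
  measurable_toFun := g.measurable_toFun.comp f.measurable_toFun
  measurable_invFun := f.measurable_invFun.comp g.measurable_invFun
  mapsTo := by
    rintro x ⟨hx1, hx2⟩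
    refine ⟨g.mapsTo hx2, ?_⟩
    show g.invFun (g.toFun (f.toFun x)) ∈ f.ran
    rw [g.left_inv _ hx2]
    exact f.mapsTo hx1
  mapsTo_inv := by
    rintro y ⟨hy1, hy2⟩
    refine ⟨f.mapsTo_inv hy2, ?_⟩
    show f.toFun (f.invFun (g.invFun y)) ∈ g.dom
    rw [f.right_inv _ hy2]
    exact g.mapsTo_inv hy1
  left_inv := by
    rintro x ⟨hx1, hx2⟩
    show f.invFun (g.invFun (g.toFun (f.toFun x))) = x
    rw [g.left_inv _ hx2, f.left_inv _ hx1]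
  right_inv := by
    rintro y ⟨hy1, hy2⟩
    show g.toFun (f.toFun (f.invFun (g.invFun y))) = y
    rw [f.right_inv _ hy2, g.right_inv _ hy1]

/-- A partial isomorphism is nonsingular for `μ` (is a partial isomorphism of `(X, μ)`)
if it maps null sets inside its domain exactly to null sets. -/
def Nonsingular (μ : Measure X) (f : PartialIso X) : Prop :=
  ∀ A ⊆ f.dom, MeasurableSet A → (μ A = 0 ↔ μ (f.toFun '' A) = 0)

/-- The graph of the partial isomorphism `f` is contained in the relation `R`. -/
def IsInnerOf (f : PartialIso X) (R : Set (X × X)) : Prop :=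
  ∀ x ∈ f.dom, (x, f.toFun x) ∈ R

end PartialIso

variable {X : Type*} [MeasurableSpace X]

/-- `IsWord Φ m k` : `m` is a `Φ`-word of length `k`, i.e. a composition of `k` elements
of `Φ` and their inverses (on its natural domain). -/
def IsWord (Φ : Set (PartialIso X)) (m : PartialIso X) (k : ℕ) : Prop :=
  ∃ l : List (PartialIso X), l.length = k ∧
    (∀ φ ∈ l, φ ∈ Φ ∨ ∃ ψ ∈ Φ, φ = ψ.symm) ∧
    m = l.foldl PartialIso.trans (PartialIso.refl X)

/-- `wordDistLE Φ μ A B r` : the essential distance `d_Φ(A, B)` is at most `r`, i.e. the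
set of points of `A` sent into `B` by some `Φ`-word of length at most `r` has positive
measure. -/
def wordDistLE (Φ : Set (PartialIso X)) (μ : Measure X) (A B : Set X) (r : ℕ) : Prop :=
  0 < μ {x ∈ A | ∃ m k, IsWord Φ m k ∧ k ≤ r ∧ x ∈ m.dom ∧ m.toFun x ∈ B}

/-- The metric-measure space `(X, d_Φ, μ)` is concentrated. -/
def Concentrated (Φ : Set (PartialIso X)) (μ : Measure X) : Prop :=
  ∀ δ : ℝ≥0∞, 0 < δ → ∃ r : ℕ, ∀ A B : Set X, MeasurableSet A → MeasurableSet B →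
    δ ≤ μ A → δ ≤ μ B → wordDistLE Φ μ A B r

/-- The metric `d_Φ` is ergodic relative to `μ` : any two sets of positive measure are at
finite essential distance. -/
def MetricErgodic (Φ : Set (PartialIso X)) (μ : Measure X) : Prop :=
  ∀ A B : Set X, MeasurableSet A → MeasurableSet B → 0 < μ A → 0 < μ B →
    ∃ r : ℕ, wordDistLE Φ μ A B r

/-- A sequence of Borel sets is asymptotically invariant for the family `Φ`. -/
def AsympInvariant (Φ : Set (PartialIso X)) (μ : Measure X) (A : ℕ → Set X) : Prop :=
  ∀ m k, IsWord Φ m k →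
    Tendsto (fun n => μ (m.toFun '' (A n ∩ m.dom) \ A n)) atTop (nhds 0)

/-- A sequence of Borel sets is nontrivial: measures uniformly bounded away from `0` and `1`. -/
def NontrivialSeq (μ : Measure X) (A : ℕ → Set X) : Prop :=
  ∃ δ : ℝ≥0∞, 0 < δ ∧ ∀ n, δ ≤ μ (A n) ∧ μ (A n) ≤ 1 - δ

/-- A countable Borel equivalence relation on `X`. -/
def IsCountableBorelER (R : Set (X × X)) : Prop :=
  MeasurableSet R ∧ Equivalence (fun x y => (x, y) ∈ R) ∧ ∀ x, {y | (x, y) ∈ R}.Countable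

/-- `μ` is quasi-invariant for `R` : partial isomorphisms of `R` map null sets to null sets. -/
def QuasiInvariant (μ : Measure X) (R : Set (X × X)) : Prop :=
  ∀ f : PartialIso X, f.IsInnerOf R → ∀ N ⊆ f.dom, MeasurableSet N → μ N = 0 →
    μ (f.toFun '' N) = 0

/-- `μ` is invariant for `R` : partial isomorphisms of `R` preserve the measure. -/
def InvariantMeasure (μ : Measure X) (R : Set (X × X)) : Prop :=
  ∀ f : PartialIso X, f.IsInnerOf R → ∀ A ⊆ f.dom, MeasurableSet A →
    μ (f.toFun '' A) = μ A

/-- `R` is ergodic for `μ` : every Borel saturated set is null or conull. -/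
def ErgodicRel (μ : Measure X) (R : Set (X × X)) : Prop :=
  ∀ A : Set X, MeasurableSet A → (∀ x ∈ A, ∀ y, (x, y) ∈ R → y ∈ A) →
    μ A = 0 ∨ μ Aᶜ = 0

/-- `Φ` is a graphing of `R` : a family of partial isomorphisms of `R` whose words connect
almost every pair of equivalent points. -/
def IsGraphing (Φ : Set (PartialIso X)) (μ : Measure X) (R : Set (X × X)) : Prop :=
  (∀ φ ∈ Φ, φ.IsInnerOf R) ∧
  ∀ᵐ x ∂μ, ∀ y, (x, y) ∈ R → ∃ m k, IsWord Φ m k ∧ x ∈ m.dom ∧ m.toFun x = y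

/-- A sequence of Borel sets is asymptotically invariant for the relation `R`. -/
def AsympInvariantRel (μ : Measure X) (R : Set (X × X)) (A : ℕ → Set X) : Prop :=
  ∀ f : PartialIso X, f.IsInnerOf R →
    Tendsto (fun n => μ (f.toFun '' (A n ∩ f.dom) \ A n)) atTop (nhds 0)

/-- `R` is strongly ergodic : every asymptotically invariant sequence is trivial. -/
def StronglyErgodic (μ : Measure X) (R : Set (X × X)) : Prop :=
  ¬ ∃ A : ℕ → Set X, (∀ n, MeasurableSet (A n)) ∧ AsympInvariantRel μ R A ∧
    NontrivialSeq μ A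

/-- The boundary `∂_Φ A` of a set `A` with respect to the family `Φ`. -/
def bdry (Φ : Set (PartialIso X)) (A : Set X) : Set X :=
  (⋃ φ ∈ Φ, φ.toFun '' (A ∩ φ.dom) ∪ φ.invFun '' (A ∩ φ.ran)) \ A

/-- A vanishing Følner sequence for the family `Φ`. -/
def VanishingFolner (Φ : Set (PartialIso X)) (μ : Measure X) (A : ℕ → Set X) : Prop :=
  (∀ n, MeasurableSet (A n)) ∧ (∀ n, 0 < μ (A n)) ∧
  Tendsto (fun n => μ (A n)) atTop (nhds 0) ∧
  Tendsto (fun n => μ (bdry Φ (A n)) / μ (A n)) atTop (nhds 0)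

/-- The equivalence relation generated by the family `Φ` : `(x, y) ∈ RGen Φ` iff `y = m x`
for some `Φ`-word `m`. -/
def RGen (Φ : Set (PartialIso X)) : Set (X × X) :=
  {p | ∃ m k, IsWord Φ m k ∧ p.1 ∈ m.dom ∧ m.toFun p.1 = p.2}

section Aux

variable {X : Type*} [MeasurableSpace X]

namespace PartialIso

protected lemma ext' {f g : PartialIso X} (hdom : f.dom = g.dom) (hran : f.ran = g.ran)
    (hto : f.toFun = g.toFun) (hinv : f.invFun = g.invFun) : f = g := by
  cases f; cases g; simp_all

@[simp] lemma refl_trans (f : PartialIso X) : (PartialIso.refl X).trans f = f := by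
  apply PartialIso.ext' <;> simp [PartialIso.trans, PartialIso.refl]

@[simp] lemma trans_refl (f : PartialIso X) : f.trans (PartialIso.refl X) = f := by
  apply PartialIso.ext' <;> simp [PartialIso.trans, PartialIso.refl]

lemma trans_assoc (f g h : PartialIso X) : (f.trans g).trans h = f.trans (g.trans h) := by
  apply PartialIso.ext'
  · show (f.dom ∩ f.toFun ⁻¹' g.dom) ∩ (g.toFun ∘ f.toFun) ⁻¹' h.dom =
      f.dom ∩ f.toFun ⁻¹' (g.dom ∩ g.toFun ⁻¹' h.dom)
    rw [Set.preimage_inter, ← Set.inter_assoc, Set.preimage_comp]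
  · show h.ran ∩ h.invFun ⁻¹' (g.ran ∩ g.invFun ⁻¹' f.ran) =
      (h.ran ∩ h.invFun ⁻¹' g.ran) ∩ (g.invFun ∘ h.invFun) ⁻¹' f.ran
    rw [Set.preimage_inter, ← Set.inter_assoc, Set.preimage_comp]
  · rfl
  · rfl

@[simp] lemma symm_symm (f : PartialIso X) : f.symm.symm = f := rfl

@[simp] lemma refl_symm : (PartialIso.refl X).symm = PartialIso.refl X := rfl

lemma trans_symm (f g : PartialIso X) : (f.trans g).symm = g.symm.trans f.symm := rfl

lemma ran_eq_image (f : PartialIso X) : f.ran = f.toFun '' f.dom := by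
  ext y
  constructor
  · intro hy; exact ⟨f.invFun y, f.mapsTo_inv hy, f.right_inv y hy⟩
  · rintro ⟨x, hx, rfl⟩; exact f.mapsTo hx

lemma image_eq (f : PartialIso X) {s : Set X} (hs : s ⊆ f.dom) :
    f.toFun '' s = f.ran ∩ f.invFun ⁻¹' s := by
  ext y
  constructor
  · rintro ⟨x, hx, rfl⟩
    exact ⟨f.mapsTo (hs hx), by simpa [f.left_inv x (hs hx)] using hx⟩
  · rintro ⟨hy, hy2⟩
    exact ⟨f.invFun y, hy2, f.right_inv y hy⟩

lemma measurableSet_image (f : PartialIso X) {s : Set X} (hs : s ⊆ f.dom)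
    (hms : MeasurableSet s) : MeasurableSet (f.toFun '' s) := by
  rw [f.image_eq hs]
  exact f.measurableSet_ran.inter (f.measurable_invFun hms)

end PartialIso

end Aux
section Words

variable {X : Type*} [MeasurableSpace X]

open PartialIso

/-- The `Φ`-word given by a list of partial isomorphisms. -/
def wordIso (l : List (PartialIso X)) : PartialIso X :=
  l.foldl PartialIso.trans (PartialIso.refl X)

lemma foldl_trans_eq (l : List (PartialIso X)) :
    ∀ m : PartialIso X, l.foldl PartialIso.trans m = m.trans (wordIso l) := by
  induction l with
  | nil => intro m; simp [wordIso]
  | cons φ l ih =>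
    intro m
    show (l.foldl PartialIso.trans (m.trans φ)) = _
    rw [ih (m.trans φ), trans_assoc]
    have : wordIso (φ :: l) = (PartialIso.refl X).trans (φ.trans (wordIso l)) := by
      show l.foldl PartialIso.trans ((PartialIso.refl X).trans φ) = _
      rw [ih ((PartialIso.refl X).trans φ), trans_assoc]
    rw [this, refl_trans]

lemma wordIso_append (l₁ l₂ : List (PartialIso X)) :
    wordIso (l₁ ++ l₂) = (wordIso l₁).trans (wordIso l₂) := by
  show (l₁ ++ l₂).foldl PartialIso.trans (PartialIso.refl X) = _
  rw [List.foldl_append, foldl_trans_eq]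
  rfl

@[simp] lemma wordIso_nil : wordIso ([] : List (PartialIso X)) = PartialIso.refl X := rfl

@[simp] lemma wordIso_singleton (φ : PartialIso X) : wordIso [φ] = φ := by
  show (PartialIso.refl X).trans φ = φ
  exact refl_trans φ

/-- Membership condition for lists building `Φ`-words. -/
def Lmem (Φ : Set (PartialIso X)) (l : List (PartialIso X)) : Prop :=
  ∀ φ ∈ l, φ ∈ Φ ∨ ∃ ψ ∈ Φ, φ = ψ.symm

lemma isWord_wordIso {Φ : Set (PartialIso X)} {l : List (PartialIso X)} (hl : Lmem Φ l) :
    IsWord Φ (wordIso l) l.length :=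
  ⟨l, rfl, hl, rfl⟩

lemma isWord_iff_exists {Φ : Set (PartialIso X)} {m : PartialIso X} {k : ℕ} :
    IsWord Φ m k ↔ ∃ l, Lmem Φ l ∧ l.length = k ∧ m = wordIso l := by
  constructor
  · rintro ⟨l, h1, h2, h3⟩; exact ⟨l, h2, h1, h3⟩
  · rintro ⟨l, h1, h2, h3⟩; exact ⟨l, h2, h1, h3⟩

lemma Lmem.append {Φ : Set (PartialIso X)} {l₁ l₂ : List (PartialIso X)}
    (h₁ : Lmem Φ l₁) (h₂ : Lmem Φ l₂) : Lmem Φ (l₁ ++ l₂) := by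
  intro φ hφ
  rcases List.mem_append.1 hφ with h | h
  exacts [h₁ φ h, h₂ φ h]

lemma Lmem.symm_list {Φ : Set (PartialIso X)} {l : List (PartialIso X)} (hl : Lmem Φ l) :
    ∃ l', Lmem Φ l' ∧ l'.length = l.length ∧ wordIso l' = (wordIso l).symm := by
  induction l using List.reverseRecOn with
  | nil => exact ⟨[], by intro φ h; simp at h, rfl, rfl⟩
  | append_singleton l φ ih =>
    have hl' : Lmem Φ l := fun ψ hψ => hl ψ (List.mem_append_left _ hψ)
    have hφ : φ ∈ Φ ∨ ∃ ψ ∈ Φ, φ = ψ.symm := hl φ (by simp)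
    obtain ⟨l', h1, h2, h3⟩ := ih hl'
    refine ⟨φ.symm :: l', ?_, by simp [h2], ?_⟩
    · intro ψ hψ
      rcases List.mem_cons.1 hψ with rfl | h
      · rcases hφ with h | ⟨ψ', hψ', rfl⟩
        · exact Or.inr ⟨φ, h, rfl⟩
        · exact Or.inl (by simpa using hψ')
      · exact h1 ψ h
    · have : wordIso (φ.symm :: l') = wordIso ([φ.symm] ++ l') := by simp
      rw [this, wordIso_append, wordIso_singleton, h3, wordIso_append, wordIso_singleton,
        trans_symm]

lemma mem_trans_dom {f g : PartialIso X} {x : X} (hx : x ∈ f.dom) (h2 : f.toFun x ∈ g.dom) :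
    x ∈ (f.trans g).dom := ⟨hx, h2⟩

lemma trans_apply (f g : PartialIso X) (x : X) : (f.trans g).toFun x = g.toFun (f.toFun x) := rfl

lemma mem_symm_dom {f : PartialIso X} {x : X} (hx : x ∈ f.dom) : f.toFun x ∈ f.symm.dom :=
  f.mapsTo hx

lemma symm_apply_apply {f : PartialIso X} {x : X} (hx : x ∈ f.dom) :
    f.symm.toFun (f.toFun x) = x := f.left_inv x hx

section Inner

variable {R : Set (X × X)}

lemma refl_inner (hEq : Equivalence (fun x y => (x, y) ∈ R)) : (PartialIso.refl X).IsInnerOf R := fun x _ => hEq.refl x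

lemma trans_inner (hEq : Equivalence (fun x y => (x, y) ∈ R)) {f g : PartialIso X} (hf : f.IsInnerOf R) (hg : g.IsInnerOf R) :
    (f.trans g).IsInnerOf R := by
  rintro x ⟨hx1, hx2⟩
  exact hEq.trans (hf x hx1) (hg _ hx2)

lemma symm_inner (hEq : Equivalence (fun x y => (x, y) ∈ R)) {f : PartialIso X} (hf : f.IsInnerOf R) : f.symm.IsInnerOf R := by
  intro y hy
  have h1 : f.invFun y ∈ f.dom := f.mapsTo_inv hy
  have := hf _ h1
  rw [f.right_inv y hy] at this
  exact hEq.symm this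

lemma wordIso_inner (hEq : Equivalence (fun x y => (x, y) ∈ R)) {Φ : Set (PartialIso X)} (hΦ : ∀ φ ∈ Φ, φ.IsInnerOf R)
    {l : List (PartialIso X)} (hl : Lmem Φ l) : (wordIso l).IsInnerOf R := by
  induction l using List.reverseRecOn with
  | nil => exact refl_inner hEq
  | append_singleton l φ ih =>
    have hl' : Lmem Φ l := fun ψ hψ => hl ψ (List.mem_append_left _ hψ)
    have hφ : φ.IsInnerOf R := by
      rcases hl φ (by simp) with h | ⟨ψ, hψ, rfl⟩
      · exact hΦ φ h
      · exact symm_inner hEq (hΦ ψ hψ)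
    rw [wordIso_append, wordIso_singleton]
    exact trans_inner hEq (ih hl') hφ

end Inner

end Words
section Erg

variable {X : Type*} [MeasurableSpace X]

open PartialIso

/-- The symmetrized generating set. -/
def genSet (Φ : Set (PartialIso X)) : Set (PartialIso X) := Φ ∪ PartialIso.symm '' Φ

lemma lmem_iff_genSet {Φ : Set (PartialIso X)} {l : List (PartialIso X)} :
    Lmem Φ l ↔ ∀ φ ∈ l, φ ∈ genSet Φ := by
  unfold Lmem genSet
  refine forall₂_congr fun φ _ => ?_
  simp [Set.mem_union, Set.mem_image, eq_comm]

lemma genSet_countable {Φ : Set (PartialIso X)} (hΦ : Φ.Countable) : (genSet Φ).Countable :=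
  hΦ.union (hΦ.image _)

lemma exists_subtype_list {Φ : Set (PartialIso X)} {l : List (PartialIso X)} (hl : Lmem Φ l) :
    ∃ l' : List ↥(genSet Φ), l'.map Subtype.val = l := by
  induction l with
  | nil => exact ⟨[], rfl⟩
  | cons φ l ih =>
    have hφ : φ ∈ genSet Φ := (lmem_iff_genSet.1 hl) φ (by simp)
    obtain ⟨l', hl'⟩ := ih (fun ψ hψ => hl ψ (List.mem_cons_of_mem _ hψ))
    exact ⟨⟨φ, hφ⟩ :: l', by simp [hl']⟩

lemma lmem_of_subtype_list {Φ : Set (PartialIso X)} (l : List ↥(genSet Φ)) :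
    Lmem Φ (l.map Subtype.val) := by
  rw [lmem_iff_genSet]
  intro φ hφ
  simp only [List.mem_map] at hφ
  obtain ⟨ψ, _, rfl⟩ := hφ
  exact ψ.2

variable {μ : MeasureTheory.Measure X} {R : Set (X × X)} {Φ : Set (PartialIso X)}

/-- Ergodicity for word-invariant sets. -/
lemma erg_words (hR : IsCountableBorelER R) (hinv : InvariantMeasure μ R)
    (herg : ErgodicRel μ R) (hΦc : Φ.Countable) (hgr : IsGraphing Φ μ R)
    {W : Set X} (hW : MeasurableSet W)
    (hWinv : ∀ m k, IsWord Φ m k → ∀ x ∈ m.dom, x ∈ W → m.toFun x ∈ W) :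
    μ W = 0 ∨ μ Wᶜ = 0 := by
  have hEq := hR.2.1
  have hcnt : Countable ↥(genSet Φ) := (genSet_countable hΦc).to_subtype
  set P : X → Prop := fun x => ∀ y, (x, y) ∈ R → ∃ m k, IsWord Φ m k ∧ x ∈ m.dom ∧ m.toFun x = y
    with hP
  have hN0 : μ {x | ¬ P x} = 0 := by
    have := hgr.2
    rwa [MeasureTheory.ae_iff] at this
  set N1 := MeasureTheory.toMeasurable μ {x | ¬ P x} with hN1
  have hN1m : MeasurableSet N1 := MeasureTheory.measurableSet_toMeasurable _ _
  have hN1null : μ N1 = 0 := by rw [hN1, MeasureTheory.measure_toMeasurable]; exact hN0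
  set wl : List ↥(genSet Φ) → PartialIso X := fun l => wordIso (l.map Subtype.val) with hwl
  set N' := ⋃ l : List ↥(genSet Φ), (wl l).toFun '' (N1 ∩ (wl l).dom) with hN'
  have hwlinner : ∀ l, (wl l).IsInnerOf R := fun l =>
    wordIso_inner hEq hgr.1 (lmem_of_subtype_list l)
  have hN'm : MeasurableSet N' :=
    MeasurableSet.iUnion fun l => (wl l).measurableSet_image Set.inter_subset_right
      (hN1m.inter (wl l).measurableSet_dom)
  have hN'null : μ N' = 0 := by
    refine MeasureTheory.measure_iUnion_null fun l => ?_
    rw [hinv (wl l) (hwlinner l) _ Set.inter_subset_right (hN1m.inter (wl l).measurableSet_dom)]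
    exact MeasureTheory.measure_mono_null Set.inter_subset_left hN1null
  have hN1N' : N1 ⊆ N' := by
    intro x hx
    refine Set.mem_iUnion.2 ⟨[], ⟨x, ⟨hx, Set.mem_univ x⟩, rfl⟩⟩
  have hN'sat : ∀ m k, IsWord Φ m k → ∀ x ∈ m.dom, x ∈ N' → m.toFun x ∈ N' := by
    intro m k hm x hxdom hxN'
    obtain ⟨l₂, _, hl₂mem, rfl⟩ := hm
    obtain ⟨l, hl⟩ := Set.mem_iUnion.1 hxN'
    obtain ⟨z, ⟨hz1, hz2⟩, rfl⟩ := hl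
    obtain ⟨l₃, hl₃⟩ := exists_subtype_list ((lmem_of_subtype_list l).append hl₂mem)
    refine Set.mem_iUnion.2 ⟨l₃, ⟨z, ⟨hz1, ?_⟩, ?_⟩⟩
    · show z ∈ (wordIso (l₃.map Subtype.val)).dom
      rw [hl₃, wordIso_append]
      exact mem_trans_dom hz2 hxdom
    · show (wordIso (l₃.map Subtype.val)).toFun z = _
      rw [hl₃, wordIso_append]
      rfl
  set W' := W \ N' with hW'
  have hW'inv : ∀ x ∈ W', ∀ y, (x, y) ∈ R → y ∈ W' := by
    rintro x ⟨hxW, hxN⟩ y hxy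
    have hPx : P x := by
      by_contra h
      exact hxN (hN1N' (MeasureTheory.subset_toMeasurable _ _ h))
    obtain ⟨m, k, hmk, hxd, rfl⟩ := hPx y hxy
    refine ⟨hWinv m k hmk x hxd hxW, fun hyN => hxN ?_⟩
    -- transport back along the inverse word
    obtain ⟨l₂, hlen, hl₂mem, rfl⟩ := hmk
    obtain ⟨l', hl'mem, _, hl'eq⟩ := Lmem.symm_list hl₂mem
    have h1 : (wordIso l₂).toFun x ∈ (wordIso l').dom := by
      rw [hl'eq]; exact mem_symm_dom hxd
    have h2 : (wordIso l').toFun ((wordIso l₂).toFun x) = x := by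
      rw [hl'eq]; exact symm_apply_apply hxd
    have := hN'sat (wordIso l') l'.length (isWord_wordIso hl'mem) _ h1 hyN
    rwa [h2] at this
  rcases herg W' (hW.diff hN'm) hW'inv with h | h
  · left
    have : μ W ≤ μ W' + μ N' := by
      refine le_trans (MeasureTheory.measure_mono ?_) (MeasureTheory.measure_union_le _ _)
      intro x hx
      by_cases hxN : x ∈ N'
      · exact Or.inr hxN
      · exact Or.inl ⟨hx, hxN⟩
    simpa [h, hN'null] using this
  · right
    have : μ Wᶜ ≤ μ W'ᶜ := MeasureTheory.measure_mono (by
      intro x hx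
      exact fun hx' => hx hx'.1)
    simpa [h] using this

/-- Transfer lemma: from any positive-measure set one can reach any other
positive-measure set by a word. -/
lemma reach_lemma (hR : IsCountableBorelER R) (hinv : InvariantMeasure μ R)
    (herg : ErgodicRel μ R) (hΦc : Φ.Countable) (hgr : IsGraphing Φ μ R)
    {S T : Set X} (hS : MeasurableSet S) (hT : MeasurableSet T)
    (hμS : 0 < μ S) (hμT : 0 < μ T) :
    ∃ l, Lmem Φ l ∧ 0 < μ (S ∩ ((wordIso l).dom ∩ (wordIso l).toFun ⁻¹' T)) := by
  have hcnt : Countable ↥(genSet Φ) := (genSet_countable hΦc).to_subtype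
  set wl : List ↥(genSet Φ) → PartialIso X := fun l => wordIso (l.map Subtype.val) with hwl
  set W := ⋃ l : List ↥(genSet Φ), ((wl l).dom ∩ (wl l).toFun ⁻¹' T) with hWdef
  have hWm : MeasurableSet W :=
    MeasurableSet.iUnion fun l =>
      (wl l).measurableSet_dom.inter ((wl l).measurable_toFun hT)
  have hTW : T ⊆ W := by
    intro x hx
    exact Set.mem_iUnion.2 ⟨[], ⟨Set.mem_univ x, hx⟩⟩
  have hWinv : ∀ m k, IsWord Φ m k → ∀ x ∈ m.dom, x ∈ W → m.toFun x ∈ W := by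
    intro m k hm x hxd hxW
    obtain ⟨l, hl⟩ := Set.mem_iUnion.1 hxW
    obtain ⟨hl1, hl2⟩ := hl
    obtain ⟨l₂, hlen, hl₂mem, rfl⟩ := hm
    obtain ⟨l', hl'mem, _, hl'eq⟩ := Lmem.symm_list hl₂mem
    obtain ⟨l₃, hl₃⟩ := exists_subtype_list (hl'mem.append (lmem_of_subtype_list l))
    have hxd' : x ∈ (wordIso l₂).dom := hxd
    have hkey : (wordIso l₂).symm.toFun ((wordIso l₂).toFun x) = x := symm_apply_apply hxd'
    refine Set.mem_iUnion.2 ⟨l₃, ?_, ?_⟩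
    · show (wordIso l₂).toFun x ∈ (wordIso (l₃.map Subtype.val)).dom
      rw [hl₃, wordIso_append]
      refine mem_trans_dom ?_ ?_
      · rw [hl'eq]; exact mem_symm_dom hxd'
      · rw [hl'eq, hkey]; exact hl1
    · show (wordIso (l₃.map Subtype.val)).toFun ((wordIso l₂).toFun x) ∈ T
      rw [hl₃, wordIso_append, trans_apply, hl'eq, hkey]
      exact hl2
  rcases erg_words hR hinv herg hΦc hgr hWm hWinv with h | h
  · exact absurd (MeasureTheory.measure_mono_null hTW h) (by exact hμT.ne')
  · have hSW : μ (S ∩ W) = μ S := by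
      have h1 : μ (S \ W) = 0 := MeasureTheory.measure_mono_null (fun x hx => hx.2) h
      have := MeasureTheory.measure_inter_add_diff S hWm (μ := μ)
      rw [h1, add_zero] at this
      exact this
    have hpos : 0 < μ (S ∩ W) := hSW ▸ hμS
    rw [hWdef, Set.inter_iUnion] at hpos
    by_contra hcon
    push_neg at hcon
    have : μ (⋃ l : List ↥(genSet Φ), S ∩ ((wl l).dom ∩ (wl l).toFun ⁻¹' T)) = 0 := by
      refine MeasureTheory.measure_iUnion_null fun l => ?_
      have h' : μ (S ∩ ((wl l).dom ∩ (wl l).toFun ⁻¹' T)) ≤ 0 :=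
        hcon (l.map Subtype.val) (lmem_of_subtype_list l)
      exact le_zero_iff.1 h'
    rw [this] at hpos
    exact absurd hpos (lt_irrefl 0)

end Erg
section Glue

variable {X : Type*} [MeasurableSpace X]

open PartialIso

/-- Restriction of a partial isomorphism to a measurable subset. -/
def PartialIso.restrict (f : PartialIso X) (s : Set X) (hs : MeasurableSet s) : PartialIso X where
  dom := f.dom ∩ s
  ran := f.ran ∩ f.invFun ⁻¹' (f.dom ∩ s)
  toFun := f.toFun
  invFun := f.invFun
  measurableSet_dom := f.measurableSet_dom.inter hs
  measurableSet_ran := f.measurableSet_ran.inter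
    (f.measurable_invFun (f.measurableSet_dom.inter hs))
  measurable_toFun := f.measurable_toFun
  measurable_invFun := f.measurable_invFun
  mapsTo := by
    rintro x ⟨hx1, hx2⟩
    refine ⟨f.mapsTo hx1, ?_⟩
    rw [Set.mem_preimage, f.left_inv x hx1]
    exact ⟨hx1, hx2⟩
  mapsTo_inv := by rintro y ⟨hy1, hy2⟩; exact hy2
  left_inv := by rintro x ⟨hx1, _⟩; exact f.left_inv x hx1
  right_inv := by rintro y ⟨hy1, _⟩; exact f.right_inv y hy1

lemma PartialIso.restrict_dom (f : PartialIso X) (s : Set X) (hs : MeasurableSet s) :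
    (f.restrict s hs).dom = f.dom ∩ s := rfl

lemma PartialIso.restrict_inner {R : Set (X × X)} {f : PartialIso X} (hf : f.IsInnerOf R)
    (s : Set X) (hs : MeasurableSet s) : (f.restrict s hs).IsInnerOf R := by
  rintro x ⟨hx1, _⟩
  exact hf x hx1

lemma PartialIso.restrict_ran_subset (f : PartialIso X) (s : Set X) (hs : MeasurableSet s) :
    (f.restrict s hs).ran ⊆ f.toFun '' (f.dom ∩ s) := by
  rintro y ⟨hy1, hy2⟩
  exact ⟨f.invFun y, hy2, f.right_inv y hy1⟩

/-- The empty partial isomorphism. -/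
def emptyIso (X : Type*) [MeasurableSpace X] : PartialIso X where
  dom := ∅
  ran := ∅
  toFun := id
  invFun := id
  measurableSet_dom := MeasurableSet.empty
  measurableSet_ran := MeasurableSet.empty
  measurable_toFun := measurable_id
  measurable_invFun := measurable_id
  mapsTo := fun x hx => hx.elim
  mapsTo_inv := fun x hx => hx.elim
  left_inv := fun x hx => hx.elim
  right_inv := fun x hx => hx.elim

/-- Gluing countably many partial isomorphisms with disjoint domains and disjoint ranges. -/
lemma glue_partialIsos (g : ℕ → PartialIso X)
    (hd : ∀ {m n : ℕ} {x : X}, x ∈ (g m).dom → x ∈ (g n).dom → m = n)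
    (hr : ∀ {m n : ℕ} {y : X}, y ∈ (g m).ran → y ∈ (g n).ran → m = n) :
    ∃ ψ : PartialIso X, ψ.dom = ⋃ n, (g n).dom ∧ ψ.ran = ⋃ n, (g n).ran ∧
      (∀ n, ∀ x ∈ (g n).dom, ψ.toFun x = (g n).toFun x) ∧
      (∀ n, ∀ y ∈ (g n).ran, ψ.invFun y = (g n).invFun y) := by
  classical
  set f : X → X := fun x =>
    if h : ∃ n, x ∈ (g n).dom then (g (Classical.choose h)).toFun x else x with hf
  set finv : X → X := fun y =>
    if h : ∃ n, y ∈ (g n).ran then (g (Classical.choose h)).invFun y else y with hfinv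
  have hf_eq : ∀ n, ∀ x ∈ (g n).dom, f x = (g n).toFun x := by
    intro n x hx
    have h : ∃ m, x ∈ (g m).dom := ⟨n, hx⟩
    have : Classical.choose h = n := hd (Classical.choose_spec h) hx
    simp only [hf, dif_pos h, this]
  have hfinv_eq : ∀ n, ∀ y ∈ (g n).ran, finv y = (g n).invFun y := by
    intro n y hy
    have h : ∃ m, y ∈ (g m).ran := ⟨n, hy⟩
    have : Classical.choose h = n := hr (Classical.choose_spec h) hy
    simp only [hfinv, dif_pos h, this]
  have hf_id : ∀ x, (¬ ∃ n, x ∈ (g n).dom) → f x = x := by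
    intro x h; simp only [hf, dif_neg h]
  have hfinv_id : ∀ y, (¬ ∃ n, y ∈ (g n).ran) → finv y = y := by
    intro y h; simp only [hfinv, dif_neg h]
  have hfm : Measurable f := by
    intro B hB
    have heq : f ⁻¹' B = (⋃ n, ((g n).dom ∩ (g n).toFun ⁻¹' B)) ∪
        ((⋃ n, (g n).dom)ᶜ ∩ B) := by
      ext x
      simp only [Set.mem_preimage, Set.mem_union, Set.mem_iUnion, Set.mem_inter_iff,
        Set.mem_compl_iff, not_exists]
      by_cases h : ∃ n, x ∈ (g n).dom
      · obtain ⟨n, hn⟩ := h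
        rw [hf_eq n x hn]
        constructor
        · intro hxB; exact Or.inl ⟨n, hn, hxB⟩
        · rintro (⟨m, hm, hmB⟩ | ⟨hc, _⟩)
          · rwa [hd hn hm]
          · exact absurd hn (hc n)
      · rw [hf_id x h]
        push_neg at h
        constructor
        · intro hxB; exact Or.inr ⟨h, hxB⟩
        · rintro (⟨m, hm, _⟩ | ⟨_, hxB⟩)
          · exact absurd hm (h m)
          · exact hxB
    rw [heq]
    refine MeasurableSet.union ?_ ?_
    · exact MeasurableSet.iUnion fun n =>
        (g n).measurableSet_dom.inter ((g n).measurable_toFun hB)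
    · exact (MeasurableSet.iUnion fun n => (g n).measurableSet_dom).compl.inter hB
  have hfinvm : Measurable finv := by
    intro B hB
    have heq : finv ⁻¹' B = (⋃ n, ((g n).ran ∩ (g n).invFun ⁻¹' B)) ∪
        ((⋃ n, (g n).ran)ᶜ ∩ B) := by
      ext y
      simp only [Set.mem_preimage, Set.mem_union, Set.mem_iUnion, Set.mem_inter_iff,
        Set.mem_compl_iff, not_exists]
      by_cases h : ∃ n, y ∈ (g n).ran
      · obtain ⟨n, hn⟩ := h
        rw [hfinv_eq n y hn]
        constructor
        · intro hyB; exact Or.inl ⟨n, hn, hyB⟩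
        · rintro (⟨m, hm, hmB⟩ | ⟨hc, _⟩)
          · rwa [hr hn hm]
          · exact absurd hn (hc n)
      · rw [hfinv_id y h]
        push_neg at h
        constructor
        · intro hyB; exact Or.inr ⟨h, hyB⟩
        · rintro (⟨m, hm, _⟩ | ⟨_, hyB⟩)
          · exact absurd hm (h m)
          · exact hyB
    rw [heq]
    refine MeasurableSet.union ?_ ?_
    · exact MeasurableSet.iUnion fun n =>
        (g n).measurableSet_ran.inter ((g n).measurable_invFun hB)
    · exact (MeasurableSet.iUnion fun n => (g n).measurableSet_ran).compl.inter hB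
  refine ⟨⟨⋃ n, (g n).dom, ⋃ n, (g n).ran, f, finv,
    MeasurableSet.iUnion fun n => (g n).measurableSet_dom,
    MeasurableSet.iUnion fun n => (g n).measurableSet_ran,
    hfm, hfinvm, ?_, ?_, ?_, ?_⟩, rfl, rfl, hf_eq, hfinv_eq⟩
  · intro x hx
    obtain ⟨n, hn⟩ := Set.mem_iUnion.1 hx
    rw [hf_eq n x hn]
    exact Set.mem_iUnion.2 ⟨n, (g n).mapsTo hn⟩
  · intro y hy
    obtain ⟨n, hn⟩ := Set.mem_iUnion.1 hy
    rw [hfinv_eq n y hn]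
    exact Set.mem_iUnion.2 ⟨n, (g n).mapsTo_inv hn⟩
  · intro x hx
    obtain ⟨n, hn⟩ := Set.mem_iUnion.1 hx
    rw [hf_eq n x hn, hfinv_eq n _ ((g n).mapsTo hn)]
    exact (g n).left_inv x hn
  · intro y hy
    obtain ⟨n, hn⟩ := Set.mem_iUnion.1 hy
    rw [hfinv_eq n y hn, hf_eq n _ ((g n).mapsTo_inv hn)]
    exact (g n).right_inv y hn

end Glue
section Transport

variable {X : Type*} [MeasurableSpace X]
variable {μ : MeasureTheory.Measure X} {R : Set (X × X)} {Φ : Set (PartialIso X)}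

open PartialIso MeasureTheory

/-- Near-maximal word-piece from `D` into `E`. -/
lemma near_max (hR : IsCountableBorelER R) (hgr : IsGraphing Φ μ R)
    {D E : Set X} (hD : MeasurableSet D) (hE : MeasurableSet E) (hDfin : μ D ≠ ⊤) :
    ∃ g : PartialIso X, g.IsInnerOf R ∧ g.dom ⊆ D ∧ g.ran ⊆ E ∧
      ∀ l, Lmem Φ l → μ (D ∩ ((wordIso l).dom ∩ (wordIso l).toFun ⁻¹' E)) ≤ 2 * μ g.dom := by
  have hEq := hR.2.1
  set wl : List ↥(genSet Φ) → PartialIso X := fun l => wordIso (l.map Subtype.val) with hwl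
  set sup := ⨆ l : List ↥(genSet Φ), μ (D ∩ ((wl l).dom ∩ (wl l).toFun ⁻¹' E)) with hsup
  by_cases h0 : sup = 0
  · refine ⟨emptyIso X, fun x hx => hx.elim, Set.empty_subset _, Set.empty_subset _, ?_⟩
    intro l hl
    obtain ⟨l', hl'⟩ := exists_subtype_list hl
    have : μ (D ∩ ((wl l').dom ∩ (wl l').toFun ⁻¹' E)) ≤ sup :=
      le_iSup (fun l => μ (D ∩ ((wl l).dom ∩ (wl l).toFun ⁻¹' E))) l'
    rw [hwl] at this
    simp only [hl'] at this
    have h2 : μ (emptyIso X).dom = 0 := by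
      show μ ∅ = 0
      exact measure_empty
    rw [h2, mul_zero]
    calc μ (D ∩ ((wordIso l).dom ∩ (wordIso l).toFun ⁻¹' E)) ≤ sup := this
    _ = 0 := h0
  · have hsupfin : sup ≠ ⊤ := by
      refine ne_top_of_le_ne_top hDfin ?_
      exact iSup_le fun l => measure_mono Set.inter_subset_left
    have hhalf : sup / 2 < sup := ENNReal.half_lt_self h0 hsupfin
    obtain ⟨l', hl'⟩ := lt_iSup_iff.1 hhalf
    set w := wl l' with hw
    set s := D ∩ w.toFun ⁻¹' E with hsdef
    have hs : MeasurableSet s := hD.inter (w.measurable_toFun hE)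
    set g := w.restrict s hs with hg
    have hgdom : g.dom = D ∩ (w.dom ∩ w.toFun ⁻¹' E) := by
      rw [hg, PartialIso.restrict_dom, hsdef]
      ext x
      simp only [Set.mem_inter_iff, Set.mem_preimage]
      tauto
    refine ⟨g, ?_, ?_, ?_, ?_⟩
    · exact PartialIso.restrict_inner
        (wordIso_inner hEq hgr.1 (lmem_of_subtype_list l')) s hs
    · rw [hgdom]; exact Set.inter_subset_left
    · intro y hy
      obtain ⟨x, hx, rfl⟩ := PartialIso.restrict_ran_subset w s hs hy
      exact hx.2.2
    · intro l hl
      obtain ⟨l₂, hl₂⟩ := exists_subtype_list hl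
      have hle : μ (D ∩ ((wl l₂).dom ∩ (wl l₂).toFun ⁻¹' E)) ≤ sup :=
        le_iSup (fun l => μ (D ∩ ((wl l).dom ∩ (wl l).toFun ⁻¹' E))) l₂
      rw [hwl] at hle
      simp only [hl₂] at hle
      have h2 : sup / 2 ≤ μ g.dom := by rw [hgdom]; exact le_of_lt hl'
      calc μ (D ∩ ((wordIso l).dom ∩ (wordIso l).toFun ⁻¹' E)) ≤ sup := hle
      _ = 2 * (sup / 2) := by
          rw [ENNReal.mul_div_cancel' (by norm_num) (by norm_num)]
      _ ≤ 2 * μ g.dom := by exact mul_le_mul_right h2 2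

/-- Existence of an inner partial isomorphism from (almost all of) `A` into `Aᶜ`. -/
lemma exists_transport [MeasureTheory.IsProbabilityMeasure μ]
    (hR : IsCountableBorelER R) (hinv : InvariantMeasure μ R) (herg : ErgodicRel μ R)
    (hΦc : Φ.Countable) (hgr : IsGraphing Φ μ R)
    {A : Set X} (hA : MeasurableSet A) (hA0 : 0 < μ A) (hhalf : μ A ≤ μ Aᶜ) :
    ∃ ψ : PartialIso X, ψ.IsInnerOf R ∧ ψ.dom ⊆ A ∧ ψ.ran ⊆ Aᶜ ∧ μ (A \ ψ.dom) = 0 := by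
  classical
  set stepFun : Set X × Set X → PartialIso X := fun p =>
    if h : MeasurableSet p.1 ∧ MeasurableSet p.2 then
      Classical.choose (near_max hR hgr h.1 h.2 (measure_ne_top μ p.1))
    else emptyIso X with hstep
  set state : ℕ → Set X × Set X :=
    fun n => Nat.rec (A, Aᶜ)
      (fun _ p => (p.1 \ (stepFun p).dom, p.2 \ (stepFun p).ran)) n with hstate
  set g : ℕ → PartialIso X := fun n => stepFun (state n) with hgdef
  have hstate_succ : ∀ n, state (n + 1) =
      ((state n).1 \ (g n).dom, (state n).2 \ (g n).ran) := fun n => rfl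
  have hmeas : ∀ n, MeasurableSet (state n).1 ∧ MeasurableSet (state n).2 := by
    intro n
    induction n with
    | zero => exact ⟨hA, hA.compl⟩
    | succ n ih =>
      rw [hstate_succ n]
      exact ⟨ih.1.diff (g n).measurableSet_dom, ih.2.diff (g n).measurableSet_ran⟩
  have hspec : ∀ n, (g n).IsInnerOf R ∧ (g n).dom ⊆ (state n).1 ∧ (g n).ran ⊆ (state n).2 ∧
      ∀ l, Lmem Φ l → μ ((state n).1 ∩ ((wordIso l).dom ∩ (wordIso l).toFun ⁻¹' (state n).2))
        ≤ 2 * μ (g n).dom := by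
    intro n
    have h := hmeas n
    have : g n = Classical.choose (near_max hR hgr h.1 h.2 (measure_ne_top μ (state n).1)) := by
      rw [hgdef]
      simp only [hstep, dif_pos h]
    rw [this]
    exact Classical.choose_spec (near_max hR hgr h.1 h.2 (measure_ne_top μ (state n).1))
  -- monotonicity
  have hmono1 : ∀ m n, m ≤ n → (state n).1 ⊆ (state m).1 := by
    intro m n hmn
    induction n with
    | zero => rw [Nat.le_zero.1 hmn]
    | succ n ih =>
      rcases Nat.lt_or_ge m (n+1) with h | h
      · refine subset_trans ?_ (ih (Nat.lt_succ_iff.1 h))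
        rw [hstate_succ n]; exact Set.diff_subset
      · rw [Nat.le_antisymm hmn h]
  have hmono2 : ∀ m n, m ≤ n → (state n).2 ⊆ (state m).2 := by
    intro m n hmn
    induction n with
    | zero => rw [Nat.le_zero.1 hmn]
    | succ n ih =>
      rcases Nat.lt_or_ge m (n+1) with h | h
      · refine subset_trans ?_ (ih (Nat.lt_succ_iff.1 h))
        rw [hstate_succ n]; exact Set.diff_subset
      · rw [Nat.le_antisymm hmn h]
  have hdomA : ∀ n, (g n).dom ⊆ A := fun n =>
    subset_trans (hspec n).2.1 (hmono1 0 n (Nat.zero_le n))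
  have hranAc : ∀ n, (g n).ran ⊆ Aᶜ := fun n =>
    subset_trans (hspec n).2.2.1 (hmono2 0 n (Nat.zero_le n))
  -- disjointness
  have hdlt : ∀ {m n : ℕ} {x : X}, m < n → x ∈ (g m).dom → x ∈ (g n).dom → False := by
    intro m n x hmn hxm hxn
    have h1 : x ∈ (state (m+1)).1 := hmono1 (m+1) n hmn ((hspec n).2.1 hxn)
    rw [hstate_succ m] at h1
    exact h1.2 hxm
  have hrlt : ∀ {m n : ℕ} {y : X}, m < n → y ∈ (g m).ran → y ∈ (g n).ran → False := by
    intro m n y hmn hym hyn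
    have h1 : y ∈ (state (m+1)).2 := hmono2 (m+1) n hmn ((hspec n).2.2.1 hyn)
    rw [hstate_succ m] at h1
    exact h1.2 hym
  have hd : ∀ {m n : ℕ} {x : X}, x ∈ (g m).dom → x ∈ (g n).dom → m = n := by
    intro m n x hxm hxn
    rcases lt_trichotomy m n with h | h | h
    · exact absurd (hdlt h hxm hxn) not_false
    · exact h
    · exact absurd (hdlt h hxn hxm) not_false
  have hr : ∀ {m n : ℕ} {y : X}, y ∈ (g m).ran → y ∈ (g n).ran → m = n := by
    intro m n y hym hyn
    rcases lt_trichotomy m n with h | h | h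
    · exact absurd (hrlt h hym hyn) not_false
    · exact h
    · exact absurd (hrlt h hyn hym) not_false
  obtain ⟨ψ, hψdom, hψran, hψto, hψinv⟩ := glue_partialIsos g hd hr
  have hψdomA : ψ.dom ⊆ A := by
    rw [hψdom]; exact Set.iUnion_subset hdomA
  have hψranAc : ψ.ran ⊆ Aᶜ := by
    rw [hψran]; exact Set.iUnion_subset hranAc
  have hψinner : ψ.IsInnerOf R := by
    intro x hx
    rw [hψdom] at hx
    obtain ⟨n, hn⟩ := Set.mem_iUnion.1 hx
    rw [hψto n x hn]
    exact (hspec n).1 x hn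
  refine ⟨ψ, hψinner, hψdomA, hψranAc, ?_⟩
  -- exhaustion
  by_contra hpos'
  have hpos : 0 < μ (A \ ψ.dom) := pos_iff_ne_zero.2 hpos'
  set S := A \ ψ.dom with hS
  set T := Aᶜ \ ψ.ran with hT
  have hSm : MeasurableSet S := hA.diff ψ.measurableSet_dom
  have hTm : MeasurableSet T := hA.compl.diff ψ.measurableSet_ran
  -- measure preservation : μ (g n).ran = μ (g n).dom
  have hmp : ∀ n, μ (g n).ran = μ (g n).dom := by
    intro n
    rw [(g n).ran_eq_image]
    exact hinv (g n) ((hspec n).1) _ subset_rfl (g n).measurableSet_dom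
  have hdisj_dom : Pairwise (Function.onFun Disjoint fun n => (g n).dom) := by
    intro m n hmn
    exact Set.disjoint_left.2 fun {x} hx hx' => hmn (hd hx hx')
  have hdisj_ran : Pairwise (Function.onFun Disjoint fun n => (g n).ran) := by
    intro m n hmn
    exact Set.disjoint_left.2 fun {y} hy hy' => hmn (hr hy hy')
  have hμdom : μ ψ.dom = ∑' n, μ (g n).dom := by
    rw [hψdom]
    exact measure_iUnion hdisj_dom fun n => (g n).measurableSet_dom
  have hμran : μ ψ.ran = ∑' n, μ (g n).ran := by
    rw [hψran]
    exact measure_iUnion hdisj_ran fun n => (g n).measurableSet_ran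
  have hμeq : μ ψ.ran = μ ψ.dom := by
    rw [hμdom, hμran]
    exact tsum_congr hmp
  have hμT : 0 < μ T := by
    have h1 : μ S = μ A - μ ψ.dom :=
      measure_diff hψdomA (ψ.measurableSet_dom.nullMeasurableSet) (measure_ne_top μ _)
    have h2 : μ T = μ Aᶜ - μ ψ.ran :=
      measure_diff hψranAc (ψ.measurableSet_ran.nullMeasurableSet) (measure_ne_top μ _)
    have h3 : μ S ≤ μ T := by
      rw [h1, h2, hμeq]
      exact tsub_le_tsub hhalf le_rfl
    exact lt_of_lt_of_le hpos h3
  obtain ⟨l, hlmem, hlpos⟩ :=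
    reach_lemma hR hinv herg hΦc hgr hSm hTm hpos hμT
  set a := μ (S ∩ ((wordIso l).dom ∩ (wordIso l).toFun ⁻¹' T)) with ha
  -- S ⊆ state n .1 and T ⊆ state n .2 for all n
  have hSsub : ∀ n, S ⊆ (state n).1 := by
    intro n
    induction n with
    | zero => exact Set.diff_subset
    | succ n ih =>
      rw [hstate_succ n]
      intro x hx
      refine ⟨ih hx, fun hxd => ?_⟩
      exact hx.2 (hψdom ▸ Set.mem_iUnion.2 ⟨n, hxd⟩)
  have hTsub : ∀ n, T ⊆ (state n).2 := by
    intro n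
    induction n with
    | zero => exact Set.diff_subset
    | succ n ih =>
      rw [hstate_succ n]
      intro y hy
      refine ⟨ih hy, fun hyd => ?_⟩
      exact hy.2 (hψran ▸ Set.mem_iUnion.2 ⟨n, hyd⟩)
  have hbound : ∀ n, a / 2 ≤ μ (g n).dom := by
    intro n
    have h1 : S ∩ ((wordIso l).dom ∩ (wordIso l).toFun ⁻¹' T) ⊆
        (state n).1 ∩ ((wordIso l).dom ∩ (wordIso l).toFun ⁻¹' (state n).2) := by
      intro x hx
      exact ⟨hSsub n hx.1, hx.2.1, hTsub n hx.2.2⟩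
    have h2 : a ≤ 2 * μ (g n).dom :=
      le_trans (measure_mono h1) ((hspec n).2.2.2 l hlmem)
    exact ENNReal.div_le_of_le_mul' h2
  have htop : (∑' _ : ℕ, a / 2) = ⊤ :=
    ENNReal.tsum_const_eq_top_of_ne_zero (by
      intro h
      rw [ENNReal.div_eq_zero_iff] at h
      rcases h with h | h
      · exact hlpos.ne' h
      · exact (by norm_num : (2:ℝ≥0∞) ≠ ⊤) h)
  have : (⊤ : ℝ≥0∞) ≤ μ ψ.dom := by
    rw [hμdom, ← htop]
    exact ENNReal.tsum_le_tsum hbound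
  exact absurd (lt_of_le_of_lt this (measure_lt_top μ _)) (lt_irrefl _)

end Transport
section Boundary

variable {X : Type*} [MeasurableSpace X]
variable {μ : MeasureTheory.Measure X} {R : Set (X × X)} {Φ : Set (PartialIso X)}

open PartialIso MeasureTheory

lemma bdry_measurable (hΦc : Φ.Countable) {A : Set X} (hA : MeasurableSet A) :
    MeasurableSet (bdry Φ A) := by
  refine MeasurableSet.diff ?_ hA
  refine MeasurableSet.biUnion hΦc fun φ _ => ?_
  refine MeasurableSet.union ?_ ?_
  · exact φ.measurableSet_image Set.inter_subset_right (hA.inter φ.measurableSet_dom)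
  · exact PartialIso.measurableSet_image φ.symm
      (Set.inter_subset_right) (hA.inter φ.measurableSet_ran)

lemma bdry_mono_family {Φ' : Set (PartialIso X)} (h : Φ ⊆ Φ') (A : Set X) :
    bdry Φ A ⊆ bdry Φ' A := by
  refine Set.diff_subset_diff_left ?_
  exact Set.biUnion_subset_biUnion_left h

lemma bdry_union_subset (Φ : Set (PartialIso X)) (A B : Set X) :
    bdry Φ (A ∪ B) ⊆ bdry Φ A ∪ bdry Φ B := by
  rintro y ⟨hy1, hy2⟩
  simp only [Set.mem_iUnion, Set.mem_union] at hy1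
  obtain ⟨φ, hφ, hcase⟩ := hy1
  have hy2A : y ∉ A := fun h => hy2 (Or.inl h)
  have hy2B : y ∉ B := fun h => hy2 (Or.inr h)
  rcases hcase with ⟨x, ⟨hxAB, hxd⟩, rfl⟩ | ⟨z, ⟨hzAB, hzr⟩, rfl⟩
  · rcases hxAB with hx | hx
    · exact Or.inl ⟨Set.mem_biUnion hφ (Or.inl ⟨x, ⟨hx, hxd⟩, rfl⟩), hy2A⟩
    · exact Or.inr ⟨Set.mem_biUnion hφ (Or.inl ⟨x, ⟨hx, hxd⟩, rfl⟩), hy2B⟩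
  · rcases hzAB with hz | hz
    · exact Or.inl ⟨Set.mem_biUnion hφ (Or.inr ⟨z, ⟨hz, hzr⟩, rfl⟩), hy2A⟩
    · exact Or.inr ⟨Set.mem_biUnion hφ (Or.inr ⟨z, ⟨hz, hzr⟩, rfl⟩), hy2B⟩

lemma bdry_compl_subset (Φ : Set (PartialIso X)) (A : Set X) :
    bdry Φ Aᶜ ⊆ ⋃ φ ∈ Φ,
      (φ.toFun '' (bdry Φ A ∩ φ.dom) ∪ φ.invFun '' (bdry Φ A ∩ φ.ran)) := by
  rintro y ⟨hy1, hy2⟩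
  have hyA : y ∈ A := not_not.1 hy2
  simp only [Set.mem_iUnion, Set.mem_union] at hy1 ⊢
  obtain ⟨φ, hφ, hcase⟩ := hy1
  refine ⟨φ, hφ, ?_⟩
  rcases hcase with ⟨x, ⟨hxAc, hxd⟩, rfl⟩ | ⟨z, ⟨hzAc, hzr⟩, rfl⟩
  · left
    refine ⟨x, ⟨⟨?_, hxAc⟩, hxd⟩, rfl⟩
    refine Set.mem_biUnion hφ (Or.inr ⟨φ.toFun x, ⟨hyA, φ.mapsTo hxd⟩, φ.left_inv x hxd⟩)
  · right
    refine ⟨z, ⟨⟨?_, hzAc⟩, hzr⟩, rfl⟩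
    refine Set.mem_biUnion hφ (Or.inl ⟨φ.invFun z, ⟨hyA, φ.mapsTo_inv hzr⟩, φ.right_inv z hzr⟩)

lemma bdry_compl_measure_le (hR : IsCountableBorelER R) (hinv : InvariantMeasure μ R)
    (hΦf : Φ.Finite) (hgr : IsGraphing Φ μ R) {A : Set X} (hA : MeasurableSet A) :
    μ (bdry Φ Aᶜ) ≤ (2 * hΦf.toFinset.card) * μ (bdry Φ A) := by
  have hEq := hR.2.1
  have hbm : MeasurableSet (bdry Φ A) := bdry_measurable hΦf.countable hA
  have h1 : μ (bdry Φ Aᶜ) ≤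
      ∑ φ ∈ hΦf.toFinset, μ (φ.toFun '' (bdry Φ A ∩ φ.dom) ∪ φ.invFun '' (bdry Φ A ∩ φ.ran)) := by
    refine le_trans (measure_mono (bdry_compl_subset Φ A)) ?_
    have : (⋃ φ ∈ Φ, (φ.toFun '' (bdry Φ A ∩ φ.dom) ∪ φ.invFun '' (bdry Φ A ∩ φ.ran))) =
        ⋃ φ ∈ hΦf.toFinset, (φ.toFun '' (bdry Φ A ∩ φ.dom) ∪ φ.invFun '' (bdry Φ A ∩ φ.ran)) := by
      congr 1
      ext φ
      simp [Set.Finite.mem_toFinset]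
    rw [this]
    exact measure_biUnion_finset_le _ _
  refine le_trans h1 ?_
  have h2 : ∀ φ ∈ hΦf.toFinset,
      μ (φ.toFun '' (bdry Φ A ∩ φ.dom) ∪ φ.invFun '' (bdry Φ A ∩ φ.ran)) ≤ 2 * μ (bdry Φ A) := by
    intro φ hφ
    have hφΦ : φ ∈ Φ := hΦf.mem_toFinset.1 hφ
    have hφinner : φ.IsInnerOf R := hgr.1 φ hφΦ
    have e1 : μ (φ.toFun '' (bdry Φ A ∩ φ.dom)) = μ (bdry Φ A ∩ φ.dom) :=
      hinv φ hφinner _ Set.inter_subset_right (hbm.inter φ.measurableSet_dom)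
    have e2 : μ (φ.invFun '' (bdry Φ A ∩ φ.ran)) = μ (bdry Φ A ∩ φ.ran) :=
      hinv φ.symm (symm_inner hEq hφinner) _ Set.inter_subset_right
        (hbm.inter φ.measurableSet_ran)
    calc μ (φ.toFun '' (bdry Φ A ∩ φ.dom) ∪ φ.invFun '' (bdry Φ A ∩ φ.ran))
        ≤ μ (φ.toFun '' (bdry Φ A ∩ φ.dom)) + μ (φ.invFun '' (bdry Φ A ∩ φ.ran)) :=
          measure_union_le _ _
      _ = μ (bdry Φ A ∩ φ.dom) + μ (bdry Φ A ∩ φ.ran) := by rw [e1, e2]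
      _ ≤ μ (bdry Φ A) + μ (bdry Φ A) :=
          add_le_add (measure_mono Set.inter_subset_left) (measure_mono Set.inter_subset_left)
      _ = 2 * μ (bdry Φ A) := (two_mul _).symm
  calc ∑ φ ∈ hΦf.toFinset, μ (φ.toFun '' (bdry Φ A ∩ φ.dom) ∪ φ.invFun '' (bdry Φ A ∩ φ.ran))
      ≤ ∑ _φ ∈ hΦf.toFinset, 2 * μ (bdry Φ A) := Finset.sum_le_sum h2
    _ = hΦf.toFinset.card * (2 * μ (bdry Φ A)) := by rw [Finset.sum_const, nsmul_eq_mul]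
    _ = (2 * hΦf.toFinset.card) * μ (bdry Φ A) := by ring

lemma isWord_mono {Φ' : Set (PartialIso X)} (h : Φ ⊆ Φ') {m : PartialIso X} {k : ℕ}
    (hm0 : IsWord Φ m k) : IsWord Φ' m k := by
  obtain ⟨l, h1, h2, h3⟩ := hm0
  exact ⟨l, h1, fun φ hφ => (h2 φ hφ).imp (fun hh => h hh) (fun ⟨ψ, hψ, he⟩ => ⟨ψ, h hψ, he⟩), h3⟩

end Boundary
section Step

variable {X : Type*} [MeasurableSpace X]
variable {μ : MeasureTheory.Measure X} {R : Set (X × X)} {Φ : Set (PartialIso X)}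

open PartialIso MeasureTheory Filter

lemma folner_step [MeasureTheory.IsProbabilityMeasure μ]
    (hR : IsCountableBorelER R) (hinv : InvariantMeasure μ R) (herg : ErgodicRel μ R)
    (hΦf : Φ.Finite) (hgr : IsGraphing Φ μ R)
    (hFol : ∀ Φ' : Set (PartialIso X), Φ'.Finite → IsGraphing Φ' μ R →
      ∃ F : ℕ → Set X, VanishingFolner Φ' μ F)
    {A : Set X} (hA : MeasurableSet A) {d κ : ℝ≥0∞} (hκ : 0 < κ)
    (hAd : μ A < d) (hd : d ≤ 1/2) (hbd : μ (bdry Φ A) ≤ κ * μ A) :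
    ∃ A' : Set X, MeasurableSet A' ∧ A ⊆ A' ∧ μ A < μ A' ∧ μ A' ≤ d ∧
      μ (bdry Φ A') ≤ κ * μ A' := by
  have hEq := hR.2.1
  -- get a transport partial isomorphism ψ : A → Aᶜ (full domain mod null)
  obtain ⟨ψ, hψinner, hψdom, hψran, hψnull⟩ :
      ∃ ψ : PartialIso X, ψ.IsInnerOf R ∧ ψ.dom ⊆ A ∧ ψ.ran ⊆ Aᶜ ∧ μ (A \ ψ.dom) = 0 := by
    by_cases hA0 : μ A = 0
    · refine ⟨emptyIso X, fun x hx => hx.elim, Set.empty_subset _, Set.empty_subset _, ?_⟩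
      exact measure_mono_null Set.diff_subset hA0
    · have hhalf : μ A ≤ μ Aᶜ := by
        have h1 : μ A ≤ 1/2 := le_trans hAd.le hd
        have h2 : μ Aᶜ = 1 - μ A := by
          rw [measure_compl hA (measure_ne_top μ A), measure_univ]
        have h3 : (1:ℝ≥0∞) - 1/2 ≤ 1 - μ A := tsub_le_tsub le_rfl h1
        have h4 : (1:ℝ≥0∞) - 1/2 = 1/2 := by
          rw [ENNReal.sub_half (by norm_num)]
        rw [h2]
        exact le_trans (le_trans h1 h4.ge) h3
      exact exists_transport hR hinv herg hΦf.countable hgr hA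
        (pos_iff_ne_zero.2 hA0) hhalf
  -- augmented graphing
  set Φ' : Set (PartialIso X) := insert ψ Φ with hΦ'
  have hΦ'f : Φ'.Finite := hΦf.insert ψ
  have hΦ'gr : IsGraphing Φ' μ R := by
    constructor
    · intro φ hφ
      rcases Set.mem_insert_iff.1 hφ with rfl | hφ
      · exact hψinner
      · exact hgr.1 φ hφ
    · refine hgr.2.mono fun x hx y hy => ?_
      obtain ⟨m, k, hw, h1, h2⟩ := hx y hy
      exact ⟨m, k, isWord_mono (Set.subset_insert ψ Φ) hw, h1, h2⟩
  obtain ⟨F, hFm, hFpos, hF0, hFr⟩ := hFol Φ' hΦ'f hΦ'gr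
  -- pick a good index
  have hgap : (0:ℝ≥0∞) < d - μ A := tsub_pos_of_lt hAd
  have hminpos : (0:ℝ≥0∞) < (κ/4) ⊓ (1/2) := by
    refine lt_min ?_ (by norm_num)
    exact ENNReal.div_pos hκ.ne' (by norm_num)
  obtain ⟨n, hn1, hn2⟩ :=
    ((hFr.eventually_lt_const hminpos).and (hF0.eventually_lt_const hgap)).exists
  set G := F n with hG
  have hGm : MeasurableSet G := hFm n
  have hGpos : 0 < μ G := hFpos n
  have hGfin : μ G ≠ ⊤ := measure_ne_top μ G
  set b := μ (bdry Φ' G) with hb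
  have hble : ∀ r : ℝ≥0∞, μ (bdry Φ' G) / μ G ≤ r → b ≤ r * μ G := by
    intro r hr
    have : (μ (bdry Φ' G) / μ G) * μ G = μ (bdry Φ' G) :=
      ENNReal.div_mul_cancel hGpos.ne' hGfin
    rw [hb, ← this]
    exact mul_le_mul_left hr _
  have hb2 : b ≤ (1/2) * μ G := hble _ (le_trans hn1.le (min_le_right _ _))
  have hb4 : b ≤ (κ/4) * μ G := hble _ (le_trans hn1.le (min_le_left _ _))
  -- the mass estimate
  have e1 : μ (G ∩ A) ≤ μ (G ∩ ψ.dom) := by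
    have hsub : G ∩ A ⊆ (G ∩ ψ.dom) ∪ (A \ ψ.dom) := by
      intro x hx
      by_cases hxd : x ∈ ψ.dom
      · exact Or.inl ⟨hx.1, hxd⟩
      · exact Or.inr ⟨hx.2, hxd⟩
    calc μ (G ∩ A) ≤ μ (G ∩ ψ.dom) + μ (A \ ψ.dom) :=
          le_trans (measure_mono hsub) (measure_union_le _ _)
      _ = μ (G ∩ ψ.dom) := by rw [hψnull, add_zero]
  have e2 : μ (G ∩ ψ.dom) = μ (ψ.toFun '' (G ∩ ψ.dom)) :=
    (hinv ψ hψinner _ Set.inter_subset_right (hGm.inter ψ.measurableSet_dom)).symm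
  have e3 : μ (ψ.toFun '' (G ∩ ψ.dom)) ≤ μ (G \ A) + b := by
    have h4 : ψ.toFun '' (G ∩ ψ.dom) ∩ G ⊆ G \ A := by
      rintro y ⟨hy1, hy2⟩
      refine ⟨hy2, fun hyA => ?_⟩
      obtain ⟨x, hx, rfl⟩ := hy1
      exact (hψran (ψ.mapsTo hx.2)) hyA
    have h5 : ψ.toFun '' (G ∩ ψ.dom) \ G ⊆ bdry Φ' G := by
      rintro y ⟨hy1, hy2⟩
      refine ⟨?_, hy2⟩
      refine Set.mem_biUnion (Set.mem_insert ψ Φ) (Or.inl ?_)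
      obtain ⟨x, hx, rfl⟩ := hy1
      exact ⟨x, ⟨hx.1, hx.2⟩, rfl⟩
    calc μ (ψ.toFun '' (G ∩ ψ.dom))
        ≤ μ (ψ.toFun '' (G ∩ ψ.dom) ∩ G) + μ (ψ.toFun '' (G ∩ ψ.dom) \ G) :=
          measure_le_inter_add_diff μ _ _
      _ ≤ μ (G \ A) + b := add_le_add (measure_mono h4) (measure_mono h5)
  have etotal : μ G ≤ 2 * μ (G \ A) + b := by
    have := measure_inter_add_diff G hA (μ := μ)
    calc μ G = μ (G ∩ A) + μ (G \ A) := this.symm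
      _ ≤ (μ (G \ A) + b) + μ (G \ A) := add_le_add (le_trans e1 (le_trans e2.le e3)) le_rfl
      _ = 2 * μ (G \ A) + b := by ring
  -- deduce μ G ≤ 4 μ(G \ A)
  have hmass : μ G ≤ 4 * μ (G \ A) := by
    have h6 : μ G ≤ 2 * μ (G \ A) + (1/2) * μ G := le_trans etotal (add_le_add le_rfl hb2)
    have h20 : (2:ℝ≥0∞) * (1/2) = 1 := by
      rw [one_div, ENNReal.mul_inv_cancel (by norm_num) (by norm_num)]
    have hhalfG : (2:ℝ≥0∞) * ((1/2) * μ G) = μ G := by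
      rw [← mul_assoc, h20, one_mul]
    have h7 : (1/2) * μ G + (1/2) * μ G ≤ (1/2) * μ G + 2 * μ (G \ A) := by
      calc (1/2) * μ G + (1/2) * μ G = μ G := by rw [← two_mul]; exact hhalfG
        _ ≤ 2 * μ (G \ A) + (1/2) * μ G := h6
        _ = (1/2) * μ G + 2 * μ (G \ A) := by ring
    have h8 : (1/2) * μ G ≤ 2 * μ (G \ A) := by
      have hfin : (1/2) * μ G ≠ ⊤ := by
        exact ENNReal.mul_ne_top (by norm_num) hGfin
      exact (ENNReal.add_le_add_iff_left hfin).1 h7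
    calc μ G = 2 * ((1/2) * μ G) := hhalfG.symm
      _ ≤ 2 * (2 * μ (G \ A)) := mul_le_mul_right h8 2
      _ = 4 * μ (G \ A) := by ring
  have hincr : 0 < μ (G \ A) := by
    by_contra h
    push_neg at h
    have : μ (G \ A) = 0 := le_zero_iff.1 h
    rw [this, mul_zero] at hmass
    exact absurd (le_antisymm hmass zero_le) hGpos.ne'
  -- the extension
  refine ⟨A ∪ G, hA.union hGm, Set.subset_union_left, ?_, ?_, ?_⟩
  · rw [show A ∪ G = A ∪ (G \ A) from (Set.union_diff_self).symm,
      measure_union Set.disjoint_sdiff_right (hGm.diff hA)]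
    exact ENNReal.lt_add_right (measure_ne_top μ A) hincr.ne'
  · calc μ (A ∪ G) ≤ μ A + μ G := measure_union_le _ _
      _ ≤ μ A + (d - μ A) := add_le_add le_rfl hn2.le
      _ = d := add_tsub_cancel_of_le hAd.le
  · have h9 : μ (bdry Φ (A ∪ G)) ≤ μ (bdry Φ A) + μ (bdry Φ G) :=
      le_trans (measure_mono (bdry_union_subset Φ A G)) (measure_union_le _ _)
    have h10 : μ (bdry Φ G) ≤ b :=
      measure_mono (bdry_mono_family (Set.subset_insert ψ Φ) G)
    have h11 : b ≤ κ * μ (G \ A) := by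
      calc b ≤ (κ/4) * μ G := hb4
        _ ≤ (κ/4) * (4 * μ (G \ A)) := mul_le_mul_right hmass _
        _ = ((κ/4) * 4) * μ (G \ A) := (mul_assoc _ _ _).symm
        _ = κ * μ (G \ A) := by rw [ENNReal.div_mul_cancel (by norm_num) (by norm_num)]
    calc μ (bdry Φ (A ∪ G)) ≤ μ (bdry Φ A) + μ (bdry Φ G) := h9
      _ ≤ κ * μ A + b := add_le_add hbd h10
      _ ≤ κ * μ A + κ * μ (G \ A) := add_le_add le_rfl h11
      _ = κ * (μ A + μ (G \ A)) := by ring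
      _ = κ * μ (A ∪ G) := by
          rw [show A ∪ G = A ∪ (G \ A) from (Set.union_diff_self).symm,
            measure_union Set.disjoint_sdiff_right (hGm.diff hA)]

end Step
section Exact

variable {X : Type*} [MeasurableSpace X]
variable {μ : MeasureTheory.Measure X} {R : Set (X × X)} {Φ : Set (PartialIso X)}

open PartialIso MeasureTheory Filter

lemma exists_exact [MeasureTheory.IsProbabilityMeasure μ]
    (hR : IsCountableBorelER R) (hinv : InvariantMeasure μ R) (herg : ErgodicRel μ R)
    (hΦf : Φ.Finite) (hgr : IsGraphing Φ μ R)
    (hFol : ∀ Φ' : Set (PartialIso X), Φ'.Finite → IsGraphing Φ' μ R →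
      ∃ F : ℕ → Set X, VanishingFolner Φ' μ F)
    {d κ : ℝ≥0∞} (hd0 : 0 < d) (hd : d ≤ 1/2) (hκ : 0 < κ) :
    ∃ A : Set X, MeasurableSet A ∧ μ A = d ∧ μ (bdry Φ A) ≤ κ * d := by
  classical
  set C : Set (Set X) := {A | MeasurableSet A ∧ μ A ≤ d ∧ μ (bdry Φ A) ≤ κ * μ A} with hC
  have hempty : (∅ : Set X) ∈ C := by
    refine ⟨MeasurableSet.empty, by simp, ?_⟩
    have hb : bdry Φ (∅ : Set X) = ∅ := by simp [bdry]
    simp [hb]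
  set M : Set X → ℝ≥0∞ := fun B => sSup {t | ∃ Cs ∈ C, B ⊆ Cs ∧ μ Cs = t} with hM
  have hMle : ∀ B, M B ≤ d := by
    intro B
    refine sSup_le ?_
    rintro t ⟨Cs, hCs, _, rfl⟩
    exact hCs.2.1
  -- one recursion step
  have exS : ∀ B ∈ C, ∀ e : ℝ≥0∞, e ≠ 0 →
      ∃ Cs, Cs ∈ C ∧ B ⊆ Cs ∧ M B - e ≤ μ Cs := by
    intro B hB e he
    by_cases h0 : M B - e = 0
    · exact ⟨B, hB, subset_rfl, by rw [h0]; exact zero_le⟩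
    · have hMne : M B ≠ 0 := by
        intro h
        exact h0 (by rw [h]; exact zero_tsub e)
      have hMnetop : M B ≠ ⊤ := ne_top_of_le_ne_top (by norm_num) (le_trans (hMle B) hd)
      have hlt : M B - e < M B := ENNReal.sub_lt_self hMnetop hMne he
      obtain ⟨t, ⟨Cs, hCs, hBCs, rfl⟩, hto⟩ := lt_sSup_iff.1 hlt
      exact ⟨Cs, hCs, hBCs, hto.le⟩
  -- build the increasing sequence
  set e : ℕ → ℝ≥0∞ := fun k => (2:ℝ≥0∞)⁻¹ ^ k with he
  have hepos : ∀ k, e k ≠ 0 := by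
    intro k
    simp [he, pow_ne_zero]
  set seq : ℕ → {B : Set X // B ∈ C} :=
    fun n => Nat.rec ⟨∅, hempty⟩
      (fun k B => ⟨Classical.choose (exS B.1 B.2 (e k) (hepos k)),
        (Classical.choose_spec (exS B.1 B.2 (e k) (hepos k))).1⟩) n with hseq
  set B : ℕ → Set X := fun k => (seq k).1 with hB
  have hBC : ∀ k, B k ∈ C := fun k => (seq k).2
  have hsucc : ∀ k, B k ⊆ B (k+1) ∧ M (B k) - e k ≤ μ (B (k+1)) := by
    intro k
    have h := Classical.choose_spec (exS (seq k).1 (seq k).2 (e k) (hepos k))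
    exact ⟨h.2.1, h.2.2⟩
  have hmono : Monotone B := monotone_nat_of_le_succ fun k => (hsucc k).1
  set Bω := ⋃ k, B k with hBω
  have hBωm : MeasurableSet Bω := MeasurableSet.iUnion fun k => (hBC k).1
  have hμBω : μ Bω = ⨆ k, μ (B k) := hmono.measure_iUnion
  have hBωd : μ Bω ≤ d := by
    rw [hμBω]
    exact iSup_le fun k => (hBC k).2.1
  -- the boundary of the union
  have hbdrysub : bdry Φ Bω ⊆ ⋃ k, ⋂ j, bdry Φ (B (k + j)) := by
    rintro y ⟨hy1, hy2⟩
    simp only [Set.mem_iUnion, Set.mem_union] at hy1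
    obtain ⟨φ, hφ, hcase⟩ := hy1
    have hynot : ∀ j, y ∉ B j := fun j hj => hy2 (Set.mem_iUnion.2 ⟨j, hj⟩)
    rcases hcase with ⟨x, ⟨hxB, hxd⟩, rfl⟩ | ⟨z, ⟨hzB, hzr⟩, rfl⟩
    · obtain ⟨k, hk⟩ := Set.mem_iUnion.1 hxB
      refine Set.mem_iUnion.2 ⟨k, Set.mem_iInter.2 fun j => ?_⟩
      refine ⟨Set.mem_biUnion hφ (Or.inl ⟨x, ⟨hmono (Nat.le_add_right k j) hk, hxd⟩, rfl⟩),
        hynot (k + j)⟩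
    · obtain ⟨k, hk⟩ := Set.mem_iUnion.1 hzB
      refine Set.mem_iUnion.2 ⟨k, Set.mem_iInter.2 fun j => ?_⟩
      refine ⟨Set.mem_biUnion hφ (Or.inr ⟨z, ⟨hmono (Nat.le_add_right k j) hk, hzr⟩, rfl⟩),
        hynot (k + j)⟩
  have hBωbd : μ (bdry Φ Bω) ≤ κ * μ Bω := by
    have hmono2 : Monotone (fun k => ⋂ j, bdry Φ (B (k + j))) := by
      intro k k' hkk'
      refine Set.subset_iInter fun j => ?_
      have : k' + j = k + ((k' - k) + j) := by omega
      rw [this]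
      exact Set.iInter_subset _ _
    have h1 : μ (⋃ k, ⋂ j, bdry Φ (B (k + j))) = ⨆ k, μ (⋂ j, bdry Φ (B (k + j))) :=
      hmono2.measure_iUnion
    calc μ (bdry Φ Bω) ≤ μ (⋃ k, ⋂ j, bdry Φ (B (k + j))) := measure_mono hbdrysub
      _ = ⨆ k, μ (⋂ j, bdry Φ (B (k + j))) := h1
      _ ≤ κ * μ Bω := by
          refine iSup_le fun k => ?_
          have h2 : μ (⋂ j, bdry Φ (B (k + j))) ≤ μ (bdry Φ (B k)) := by
            refine measure_mono ?_
            have := Set.iInter_subset (fun j => bdry Φ (B (k + j))) 0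
            simpa using this
          refine le_trans h2 (le_trans (hBC k).2.2 ?_)
          exact mul_le_mul_right (le_trans (le_iSup (fun k => μ (B k)) k) hμBω.ge) κ
  have hBωC : Bω ∈ C := ⟨hBωm, hBωd, hBωbd⟩
  -- μ Bω = d
  have hμeq : μ Bω = d := by
    by_contra hne
    have hlt : μ Bω < d := lt_of_le_of_ne hBωd hne
    obtain ⟨A', hA'm, hsub', hlt', hle', hbd'⟩ :=
      folner_step hR hinv herg hΦf hgr hFol hBωm hκ hlt hd hBωbd
    have hA'C : A' ∈ C := ⟨hA'm, hle', hbd'⟩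
    have hkey : ∀ k, μ A' ≤ μ Bω + e k := by
      intro k
      have h1 : μ A' ≤ M (B k) := by
        refine le_sSup ?_
        exact ⟨A', hA'C, subset_trans (subset_trans (Set.subset_iUnion B k) subset_rfl) hsub',
          rfl⟩
      have h2 : M (B k) ≤ μ (B (k+1)) + e k := tsub_le_iff_right.1 (hsucc k).2
      have h3 : μ (B (k+1)) ≤ μ Bω := measure_mono (Set.subset_iUnion B (k+1))
      exact le_trans h1 (le_trans h2 (add_le_add h3 le_rfl))
    have : μ A' ≤ μ Bω := by
      refine ENNReal.le_of_forall_pos_le_add fun ε hε _ => ?_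
      obtain ⟨k, hk⟩ := ENNReal.exists_inv_two_pow_lt (by exact_mod_cast hε.ne' : (ε:ℝ≥0∞) ≠ 0)
      exact le_trans (hkey k) (add_le_add le_rfl hk.le)
    exact absurd (lt_of_lt_of_le hlt' this) (lt_irrefl _)
  exact ⟨Bω, hBωm, hμeq, hμeq ▸ hBωbd⟩

end Exact
/-- If every finite graphing of an ergodic finite-type p.m.p. countable Borel
equivalence relation admits a vanishing Følner sequence, then for every finite graphing
`Φ`, every `c ∈ (0,1)` and every `ε > 0` there is a Borel set `A` with `μ(A) = c` and
`μ(∂_Φ A) ≤ ε · μ(A)`. -/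
theorem stmt7 {X : Type*} [MeasurableSpace X] [StandardBorelSpace X]
    (μ : Measure X) [IsProbabilityMeasure μ] [NullSingletonClass μ]
    (R : Set (X × X)) (hR : IsCountableBorelER R)
    (hinv : InvariantMeasure μ R) (herg : ErgodicRel μ R)
    (hft : ∃ Φ : Set (PartialIso X), Φ.Finite ∧ IsGraphing Φ μ R)
    (hFolner : ∀ Φ : Set (PartialIso X), Φ.Finite → IsGraphing Φ μ R →
      ∃ A : ℕ → Set X, VanishingFolner Φ μ A) :
    ∀ Φ : Set (PartialIso X), Φ.Finite → IsGraphing Φ μ R →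
      ∀ c : ℝ≥0∞, 0 < c → c < 1 → ∀ ε : ℝ≥0∞, 0 < ε →
        ∃ A : Set X, MeasurableSet A ∧ μ A = c ∧ μ (bdry Φ A) ≤ ε * μ A := by
  intro Φ hΦf hgr c hc0 hc1 ε hε0
  by_cases hchalf : c ≤ 1/2
  · obtain ⟨A, hAm, hAd, hAbd⟩ :=
      exists_exact hR hinv herg hΦf hgr hFolner hc0 hchalf hε0
    exact ⟨A, hAm, hAd, by rw [hAd]; exact hAbd⟩
  · push_neg at hchalf
    set d : ℝ≥0∞ := 1 - c with hddef
    have hd0 : 0 < d := tsub_pos_of_lt hc1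
    have hdhalf : d ≤ 1/2 := by
      have h1 : (1:ℝ≥0∞) - c ≤ 1 - 1/2 := tsub_le_tsub le_rfl hchalf.le
      have h2 : (1:ℝ≥0∞) - 1/2 = 1/2 := ENNReal.sub_half (by norm_num)
      rw [hddef]
      exact le_trans h1 h2.le
    have hcompl : ∀ {M : Set X}, MeasurableSet M → μ M = d → μ Mᶜ = c := by
      intro M hMm hMd
      rw [measure_compl hMm (measure_ne_top μ M), measure_univ, hMd, hddef]
      exact ENNReal.sub_sub_cancel ENNReal.one_ne_top hc1.le
    by_cases hinf : ε * c = ⊤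
    · obtain ⟨M, hMm, hMd, _⟩ :=
        exists_exact hR hinv herg hΦf hgr hFolner hd0 hdhalf (κ := 1) one_pos
      refine ⟨Mᶜ, hMm.compl, hcompl hMm hMd, ?_⟩
      rw [hcompl hMm hMd, hinf]
      exact le_top
    · set n : ℝ≥0∞ := (hΦf.toFinset.card : ℝ≥0∞) with hn
      have hnfin : 2 * n + 1 ≠ ⊤ := by
        rw [hn]
        exact ENNReal.add_ne_top.2
          ⟨ENNReal.mul_ne_top (by norm_num) (ENNReal.natCast_ne_top _), ENNReal.one_ne_top⟩
      have hden0 : 2 * n + 1 ≠ 0 := fun h => one_ne_zero (add_eq_zero.1 h).2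
      set κ : ℝ≥0∞ := (ε * c) / (2 * n + 1) with hκdef
      have hκ0 : 0 < κ := by
        refine ENNReal.div_pos ?_ hnfin
        exact (ENNReal.mul_pos hε0.ne' hc0.ne').ne'
      obtain ⟨M, hMm, hMd, hMbd⟩ :=
        exists_exact hR hinv herg hΦf hgr hFolner hd0 hdhalf hκ0
      refine ⟨Mᶜ, hMm.compl, hcompl hMm hMd, ?_⟩
      rw [hcompl hMm hMd]
      have h1 : μ (bdry Φ Mᶜ) ≤ (2 * n) * μ (bdry Φ M) :=
        bdry_compl_measure_le hR hinv hΦf hgr hMm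
      have h2 : μ (bdry Φ M) ≤ κ := by
        refine le_trans hMbd ?_
        calc κ * d ≤ κ * 1 := mul_le_mul_right (le_trans hdhalf (by norm_num)) κ
          _ = κ := mul_one κ
      calc μ (bdry Φ Mᶜ) ≤ (2 * n) * κ := le_trans h1 (mul_le_mul_right h2 _)
        _ ≤ (2 * n + 1) * κ := mul_le_mul_left le_self_add κ
        _ = ε * c := by
            rw [hκdef, ENNReal.mul_div_cancel hden0 hnfin]
end

section
/- Let R be a countable Borel equivalence relation on a standard Borel space X with an atomless quasi-invariant Borel probability measure μ, and let Φ be a finite family of partial isomorphisms of R. Suppose that for every δ ∈ (0,1) there exists an asymptotically invariant sequence (A_k) for R with μ(A_k) = δ for all k. Then Φ admits a vanishing Følner sequence. -/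
open MeasureTheory Filter Set
open scoped ENNReal

variable {X : Type*} [MeasurableSpace X]

/-- If for every `δ ∈ (0,1)` the relation `R` admits an asymptotically
invariant sequence of sets of constant measure `δ`, then any finite family `Φ` of partial
isomorphisms of `R` admits a vanishing Følner sequence. -/
theorem stmt8 {X : Type*} [MeasurableSpace X] [StandardBorelSpace X]
    (μ : Measure X) [IsProbabilityMeasure μ] [NullSingletonClass μ]
    (R : Set (X × X)) (hR : IsCountableBorelER R)
    (hqi : QuasiInvariant μ R)
    (Φ : Set (PartialIso X)) (hΦfin : Φ.Finite) (hΦR : ∀ φ ∈ Φ, φ.IsInnerOf R)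
    (hAI : ∀ δ : ℝ≥0∞, 0 < δ → δ < 1 →
      ∃ A : ℕ → Set X, (∀ k, MeasurableSet (A k)) ∧
        AsympInvariantRel μ R A ∧ ∀ k, μ (A k) = δ) :
    ∃ A : ℕ → Set X, VanishingFolner Φ μ A := by

  classical
  have hsymm : ∀ φ ∈ Φ, (PartialIso.symm φ).IsInnerOf R := by
    intro φ hφ y hy
    have h1 : φ.invFun y ∈ φ.dom := φ.mapsTo_inv hy
    have h2 := hΦR φ hφ _ h1
    rw [φ.right_inv y hy] at h2
    exact hR.2.1.symm h2
  -- boundary measure of an asymptotically invariant sequence tends to 0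
  have key : ∀ B : ℕ → Set X, AsympInvariantRel μ R B →
      Tendsto (fun k => μ (bdry Φ (B k))) atTop (nhds 0) := by
    intro B hB
    have hb : ∀ k, μ (bdry Φ (B k)) ≤
        ∑ φ ∈ hΦfin.toFinset,
          (μ (φ.toFun '' (B k ∩ φ.dom) \ B k) +
           μ ((PartialIso.symm φ).toFun '' (B k ∩ (PartialIso.symm φ).dom) \ B k)) := by
      intro k
      have hsub : bdry Φ (B k) ⊆ ⋃ φ ∈ hΦfin.toFinset,
          ((φ.toFun '' (B k ∩ φ.dom) \ B k) ∪
           ((PartialIso.symm φ).toFun '' (B k ∩ (PartialIso.symm φ).dom) \ B k)) := by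
        rintro x ⟨hx1, hx2⟩
        simp only [mem_iUnion, exists_prop] at hx1 ⊢
        obtain ⟨φ, hφ, hmem⟩ := hx1
        exact ⟨φ, hΦfin.mem_toFinset.2 hφ,
          hmem.imp (fun h => ⟨h, hx2⟩) (fun h => ⟨h, hx2⟩)⟩
      calc μ (bdry Φ (B k)) ≤ μ (⋃ φ ∈ hΦfin.toFinset,
            ((φ.toFun '' (B k ∩ φ.dom) \ B k) ∪
             ((PartialIso.symm φ).toFun '' (B k ∩ (PartialIso.symm φ).dom) \ B k))) :=
              measure_mono hsub
        _ ≤ ∑ φ ∈ hΦfin.toFinset, μ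
            ((φ.toFun '' (B k ∩ φ.dom) \ B k) ∪
             ((PartialIso.symm φ).toFun '' (B k ∩ (PartialIso.symm φ).dom) \ B k)) :=
              measure_biUnion_finset_le _ _
        _ ≤ _ := Finset.sum_le_sum fun φ _ => measure_union_le _ _
    have hlim : Tendsto (fun k => ∑ φ ∈ hΦfin.toFinset,
        (μ (φ.toFun '' (B k ∩ φ.dom) \ B k) +
         μ ((PartialIso.symm φ).toFun '' (B k ∩ (PartialIso.symm φ).dom) \ B k)))
        atTop (nhds 0) := by
      have h0 : (0 : ℝ≥0∞) = ∑ φ ∈ hΦfin.toFinset, (0 : ℝ≥0∞) := by simp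
      rw [h0]
      refine tendsto_finset_sum _ fun φ hφ => ?_
      have hφΦ := hΦfin.mem_toFinset.1 hφ
      have h1 := hB φ (hΦR φ hφΦ)
      have h2 := hB (PartialIso.symm φ) (hsymm φ hφΦ)
      simpa using h1.add h2
    exact tendsto_of_tendsto_of_tendsto_of_le_of_le tendsto_const_nhds hlim
      (fun k => zero_le) hb
  set δ : ℕ → ℝ≥0∞ := fun n => ((n : ℝ≥0∞) + 2)⁻¹ with hδdef
  have hδpos : ∀ n, 0 < δ n := fun n => ENNReal.inv_pos.2 (by simp)
  have hδlt : ∀ n, δ n < 1 := by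
    intro n
    rw [hδdef]
    refine ENNReal.inv_lt_one.2 ?_
    calc (1 : ℝ≥0∞) < 2 := by norm_num
      _ ≤ (n : ℝ≥0∞) + 2 := le_add_self
  have hδne0 : ∀ n, δ n ≠ 0 := fun n => (hδpos n).ne'
  have hδnetop : ∀ n, δ n ≠ ⊤ := fun n =>
    ENNReal.inv_ne_top.2 (by simp)
  choose B hBmeas hBAI hBmeq using fun n => hAI (δ n) (hδpos n) (hδlt n)
  have hεpos : ∀ n, (0 : ℝ≥0∞) < δ n * ((n : ℝ≥0∞) + 1)⁻¹ := by
    intro n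
    refine ENNReal.mul_pos (hδne0 n) ?_
    exact (ENNReal.inv_pos.2 (ENNReal.add_ne_top.2 ⟨ENNReal.natCast_ne_top n, by norm_num⟩)).ne'
  have hex : ∀ n, ∃ k, μ (bdry Φ (B n k)) < δ n * ((n : ℝ≥0∞) + 1)⁻¹ := fun n =>
    ((key (B n) (hBAI n)).eventually_lt_const (hεpos n)).exists
  choose k hk using hex
  refine ⟨fun n => B n (k n), fun n => hBmeas n (k n), ?_, ?_, ?_⟩
  · intro n
    rw [hBmeq n (k n)]
    exact hδpos n
  · have : Tendsto δ atTop (nhds 0) := by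
      have h := ENNReal.tendsto_inv_nat_nhds_zero.comp (tendsto_add_atTop_nat 2)
      refine Tendsto.congr (fun n => ?_) h
      simp only [Function.comp_apply, hδdef]
      norm_cast
    simpa [hBmeq] using this
  · have hub : ∀ n, μ (bdry Φ (B n (k n))) / μ (B n (k n)) ≤ ((n : ℝ≥0∞) + 1)⁻¹ := by
      intro n
      rw [hBmeq n (k n)]
      calc μ (bdry Φ (B n (k n))) / δ n ≤ (δ n * ((n : ℝ≥0∞) + 1)⁻¹) / δ n :=
            ENNReal.div_le_div_right (hk n).le _
        _ = ((n : ℝ≥0∞) + 1)⁻¹ := by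
            rw [mul_comm, mul_div_assoc, ENNReal.div_self (hδne0 n) (hδnetop n), mul_one]
    have hlim1 : Tendsto (fun n : ℕ => ((n : ℝ≥0∞) + 1)⁻¹) atTop (nhds 0) := by
      have h := ENNReal.tendsto_inv_nat_nhds_zero.comp (tendsto_add_atTop_nat 1)
      refine Tendsto.congr (fun n => ?_) h
      simp only [Function.comp_apply]
      norm_cast
    exact tendsto_of_tendsto_of_tendsto_of_le_of_le tendsto_const_nhds hlim1
      (fun n => zero_le) hub
end
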